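/- Independent amalgamation for bilinear spaces: given K-bilinear spaces V, W₁, W₂ and bilinear monomorphisms f₁ : V → W₁ and f₂ : V → W₂ (injective linear maps respecting the bilinear forms), there exists a K-bilinear space U and bilinear monomorphisms g₁ : W₁ → U and g₂ : W₂ → U such that g₁ ∘ f₁ = g₂ ∘ f₂ and g₁(W₁) ∩ g₂(W₂) = g₁(f₁(V)) as subspaces of U (i.e. the images are linearly independent over the image of V). -/

import Mathlib

universe u

/-- Independent amalgamation of bilinear spaces: a span of bilinear monomorphisms
`W₁ ← V → W₂` can be amalgamated to `W₁ → U ← W₂` with the images of `W₁` and `W₂`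
linearly independent over the image of `V`. -/
theorem bilinear_independent_amalgamation {K : Type u} [Field K]
    (V W₁ W₂ : Type u) [AddCommGroup V] [Module K V]
    [AddCommGroup W₁] [Module K W₁] [AddCommGroup W₂] [Module K W₂]
    (BV : V →ₗ[K] V →ₗ[K] K) (B₁ : W₁ →ₗ[K] W₁ →ₗ[K] K) (B₂ : W₂ →ₗ[K] W₂ →ₗ[K] K)
    (f₁ : V →ₗ[K] W₁) (f₂ : V →ₗ[K] W₂)
    (hf₁ : Function.Injective f₁) (hf₁b : ∀ x y : V, B₁ (f₁ x) (f₁ y) = BV x y)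
    (hf₂ : Function.Injective f₂) (hf₂b : ∀ x y : V, B₂ (f₂ x) (f₂ y) = BV x y) :
    ∃ (U : Type u) (_ : AddCommGroup U) (_ : Module K U)
      (BU : U →ₗ[K] U →ₗ[K] K) (g₁ : W₁ →ₗ[K] U) (g₂ : W₂ →ₗ[K] U),
      Function.Injective g₁ ∧ (∀ x y : W₁, BU (g₁ x) (g₁ y) = B₁ x y) ∧
      Function.Injective g₂ ∧ (∀ x y : W₂, BU (g₂ x) (g₂ y) = B₂ x y) ∧
      g₁ ∘ₗ f₁ = g₂ ∘ₗ f₂ ∧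
      LinearMap.range g₁ ⊓ LinearMap.range g₂ = LinearMap.range (g₁ ∘ₗ f₁) := by
  classical
  -- left inverses of f₁ and f₂
  obtain ⟨r₁, hr₁⟩ := f₁.exists_leftInverse_of_injective (LinearMap.ker_eq_bot.mpr hf₁)
  obtain ⟨r₂, hr₂⟩ := f₂.exists_leftInverse_of_injective (LinearMap.ker_eq_bot.mpr hf₂)
  have hr₁' : ∀ v : V, r₁ (f₁ v) = v := fun v => congrFun (congrArg DFunLike.coe hr₁) v
  have hr₂' : ∀ v : V, r₂ (f₂ v) = v := fun v => congrFun (congrArg DFunLike.coe hr₂) v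
  -- complement of range f₂ in W₂
  set p : Submodule K W₂ := LinearMap.range f₂ with hp
  obtain ⟨q, hq⟩ := Submodule.exists_isCompl p
  set πp : W₂ →ₗ[K] p := p.linearProjOfIsCompl q hq with hπp
  set πq : W₂ →ₗ[K] q := q.linearProjOfIsCompl p hq.symm with hπq
  -- the "V-coordinate" of an element of W₂
  set π : W₂ →ₗ[K] V := r₂ ∘ₗ p.subtype ∘ₗ πp with hπ
  have hdec : ∀ x : W₂, f₂ (π x) + (πq x : W₂) = x := by
    intro x
    have h1 : (πp x : W₂) ∈ p := (πp x).2
    obtain ⟨v, hv⟩ := h1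
    have : f₂ (π x) = (πp x : W₂) := by
      simp only [hπ, LinearMap.comp_apply, Submodule.subtype_apply, ← hv, hr₂']
    rw [this]
    exact Submodule.projection_add_projection_eq_self hq x
  have hπf₂ : ∀ v : V, π (f₂ v) = v := by
    intro v
    have hmem : f₂ v ∈ p := ⟨v, rfl⟩
    simp only [hπ, LinearMap.comp_apply, Submodule.subtype_apply, hπp,
      Submodule.projectionOnto_apply_of_mem_left hq hmem]
    exact (congrArg r₂ (congrArg Subtype.val
      (Submodule.projectionOnto_apply_of_mem_left hq hmem))).trans (hr₂' v)
  have hπqf₂ : ∀ v : V, πq (f₂ v) = 0 := fun v =>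
    Submodule.projectionOnto_apply_of_mem_right hq.symm ⟨v, rfl⟩
  -- the amalgam
  refine ⟨W₁ × q, inferInstance, inferInstance, ?_, ?_, ?_, ?_⟩
  · -- bilinear form
    exact LinearMap.mk₂ K
      (fun a b => B₁ a.1 b.1 + B₂ (f₂ (r₁ a.1)) (b.2 : W₂) + B₂ (a.2 : W₂) (f₂ (r₁ b.1))
        + B₂ (a.2 : W₂) (b.2 : W₂))
      (by intro a a' b; simp [map_add]; ring)
      (by intro c a b; simp [map_smul]; ring)
      (by intro a b b'; simp [map_add]; ring)
      (by intro c a b; simp [map_smul]; ring)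
  · -- g₁
    exact LinearMap.inl K W₁ q
  · -- g₂
    exact LinearMap.prod (f₁ ∘ₗ π) πq
  have hg₂fst : ∀ x : W₂, (LinearMap.prod (f₁ ∘ₗ π) πq) x = (f₁ (π x), πq x) := fun _ => rfl
  refine ⟨?_, ?_, ?_, ?_, ?_, ?_⟩
  · intro a b h
    simpa using congrArg Prod.fst h
  · intro x y
    simp [LinearMap.mk₂_apply, hr₁']
  · intro a b h
    have h1 : f₁ (π a) = f₁ (π b) := congrArg Prod.fst h
    have h2 : πq a = πq b := congrArg Prod.snd h
    have := hf₁ h1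
    rw [← hdec a, ← hdec b, this, h2]
  · intro x y
    simp only [hg₂fst, LinearMap.mk₂_apply, hr₁', hf₁b]
    conv_rhs => rw [← hdec x, ← hdec y]
    simp only [map_add, LinearMap.add_apply, hf₂b]
    ring
  · refine LinearMap.ext fun v => ?_
    simp only [LinearMap.comp_apply, LinearMap.inl_apply, hg₂fst, hπf₂, hπqf₂]
  · apply le_antisymm
    · rintro u ⟨⟨w, hw⟩, ⟨x, hx⟩⟩
      refine ⟨π x, ?_⟩
      have h2 : πq x = 0 := by
        have := congrArg Prod.snd hx
        rw [← hw] at this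
        simpa [hg₂fst] using this
      have h1 : f₁ (π x) = w := by
        have := congrArg Prod.fst hx
        rw [← hw] at this
        simpa [hg₂fst] using this
      simp only [LinearMap.comp_apply, LinearMap.inl_apply]
      rw [h1, ← hw]
      rfl
    · rintro u ⟨v, hv⟩
      refine ⟨⟨f₁ v, hv⟩, ⟨f₂ v, ?_⟩⟩
      rw [hg₂fst, hπf₂, hπqf₂, ← hv]
      rfl
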